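/- In k-valued Łukasiewicz logic Ł_k (for finite k ≥ 2), for all formulas A and B, A semantically entails B if and only if the formula ¬(A ⊃ (A ⊃ (… ⊃ (A ⊃ ¬A)…))) ⊃ B, where the antecedent contains k−1 nested implications with A, is valid. -/

import Mathlib

inductive Fml where
  | var : ℕ → Fml
  | and : Fml → Fml → Fml
  | or : Fml → Fml → Fml
  | imp : Fml → Fml → Fml
  | neg : Fml → Fml

def val (v : ℕ → ℚ) : Fml → ℚ
  | .var n => v n
  | .and a b => min (val v a) (val v b)
  | .or a b => max (val v a) (val v b)
  | .imp a b => min 1 (1 - val v a + val v b)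
  | .neg a => 1 - val v a

/-- valuation into the 3 truth values of Ł₃ -/
def IsVal3 (v : ℕ → ℚ) : Prop := ∀ n, v n = 0 ∨ v n = 1/2 ∨ v n = 1

/-- valuation into the k truth values {i/(k-1) : 0 ≤ i ≤ k-1} of Ł_k -/
def IsValK (k : ℕ) (v : ℕ → ℚ) : Prop :=
  ∀ n, ∃ i : ℕ, i ≤ k - 1 ∧ v n = (i : ℚ) / (k - 1 : ℕ)

def Valid3 (A : Fml) : Prop := ∀ v, IsVal3 v → val v A = 1

def Entails3 (A B : Fml) : Prop := ∀ v, IsVal3 v → val v A = 1 → val v B = 1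

def ValidK (k : ℕ) (A : Fml) : Prop := ∀ v, IsValK k v → val v A = 1

def EntailsK (k : ℕ) (A B : Fml) : Prop :=
  ∀ v, IsValK k v → val v A = 1 → val v B = 1

/-- A ⊃ (A ⊃ ( … ⊃ (A ⊃ B)…)) with n antecedent occurrences of A -/
def impIter (A B : Fml) : ℕ → Fml
  | 0 => B
  | n + 1 => Fml.imp A (impIter A B n)

lemma grid {k : ℕ} (hk : 2 ≤ k) {v : ℕ → ℚ} (hv : IsValK k v) (F : Fml) :
    ∃ i : ℕ, i ≤ k - 1 ∧ val v F = (i : ℚ) / (k - 1 : ℕ) := by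
  have hd : (0:ℚ) < ((k - 1 : ℕ) : ℚ) := by
    have : 1 ≤ k - 1 := by omega
    exact_mod_cast Nat.lt_of_lt_of_le Nat.zero_lt_one this
  induction F with
  | var n => exact hv n
  | and a b iha ihb =>
    obtain ⟨i, hi, ha⟩ := iha; obtain ⟨j, hj, hb⟩ := ihb
    refine ⟨min i j, by omega, ?_⟩
    simp only [val, ha, hb, Nat.cast_min]
    exact min_div_div_right hd.le _ _
  | or a b iha ihb =>
    obtain ⟨i, hi, ha⟩ := iha; obtain ⟨j, hj, hb⟩ := ihb
    refine ⟨max i j, by omega, ?_⟩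
    simp only [val, ha, hb, Nat.cast_max]
    exact max_div_div_right hd.le _ _
  | imp a b iha ihb =>
    obtain ⟨i, hi, ha⟩ := iha; obtain ⟨j, hj, hb⟩ := ihb
    refine ⟨min (k-1) (k-1-i+j), by omega, ?_⟩
    simp only [val, ha, hb]
    rw [Nat.cast_min, ← min_div_div_right hd.le, div_self hd.ne', Nat.cast_add,
      Nat.cast_sub hi, add_div, sub_div, div_self hd.ne']
  | neg a iha =>
    obtain ⟨i, hi, ha⟩ := iha
    refine ⟨k-1-i, by omega, ?_⟩
    simp only [val, ha]
    rw [Nat.cast_sub hi, sub_div, div_self hd.ne']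

lemma val_bounds {k : ℕ} (hk : 2 ≤ k) {v : ℕ → ℚ} (hv : IsValK k v) (F : Fml) :
    0 ≤ val v F ∧ val v F ≤ 1 := by
  have hd : (0:ℚ) < ((k - 1 : ℕ) : ℚ) := by
    have : 1 ≤ k - 1 := by omega
    exact_mod_cast Nat.lt_of_lt_of_le Nat.zero_lt_one this
  obtain ⟨i, hi, h⟩ := grid hk hv F
  constructor
  · rw [h]; positivity
  · rw [h, div_le_one hd]; exact_mod_cast hi

lemma impIter_val (v : ℕ → ℚ) (A : Fml) (h0 : 0 ≤ val v A) (h1 : val v A ≤ 1) (n : ℕ) :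
    val v (impIter A (Fml.neg A) n) = min 1 ((n+1) * (1 - val v A)) := by
  induction n with
  | zero => simp [impIter, val]; linarith
  | succ n ih =>
    simp only [impIter, val, ih]
    rcases le_total 1 ((n+1) * (1 - val v A)) with h | h
    · rw [min_eq_left h, min_eq_left (by linarith), min_eq_left (by push_cast; nlinarith)]
    · rw [min_eq_right h]
      congr 1
      push_cast
      ring

lemma neg_impIter {k : ℕ} (hk : 2 ≤ k) {v : ℕ → ℚ} (hv : IsValK k v) (A : Fml) :
    val v (Fml.neg (impIter A (Fml.neg A) (k - 1)))
      = if val v A = 1 then 1 else 0 := by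
  obtain ⟨h0, h1⟩ := val_bounds hk hv A
  have key := impIter_val v A h0 h1 (k - 1)
  have hd : (0:ℚ) < ((k - 1 : ℕ) : ℚ) := by
    have : 1 ≤ k - 1 := by omega
    exact_mod_cast Nat.lt_of_lt_of_le Nat.zero_lt_one this
  have hcast : ((k - 1 : ℕ) : ℚ) + 1 = (k : ℚ) := by
    rw [Nat.cast_sub (by omega)]; push_cast; ring
  rw [hcast] at key
  simp only [val, key]
  split_ifs with ha
  · rw [ha]; norm_num
  · obtain ⟨i, hi, hA⟩ := grid hk hv A
    have hik : i ≠ k - 1 := by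
      rintro rfl
      exact ha (by rw [hA, div_self hd.ne'])
    have hi2 : (i : ℚ) ≤ ((k-1:ℕ):ℚ) - 1 := by
      have h' : i + 1 ≤ k - 1 := by omega
      have := (Nat.cast_le (α := ℚ)).mpr h'
      push_cast at this
      linarith
    have h1a : 1 / ((k-1:ℕ):ℚ) ≤ 1 - val v A := by
      rw [hA, le_sub_iff_add_le, ← add_div, div_le_one hd]
      linarith
    have hk' : ((k-1:ℕ):ℚ) < (k:ℚ) := by linarith [hcast]
    have hlt : (1:ℚ) < k * (1 - val v A) := by
      calc (1:ℚ) < (k:ℚ) / ((k-1:ℕ):ℚ) := (one_lt_div hd).mpr hk'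
        _ = k * (1 / ((k-1:ℕ):ℚ)) := by ring
        _ ≤ k * (1 - val v A) :=
            mul_le_mul_of_nonneg_left h1a (by positivity)
    rw [min_eq_left hlt.le]
    norm_num

theorem stmt3 (k : ℕ) (hk : 2 ≤ k) (A B : Fml) :
    EntailsK k A B ↔
      ValidK k (Fml.imp (Fml.neg (impIter A (Fml.neg A) (k - 1))) B) := by
  constructor
  · intro h v hv
    obtain ⟨hb0, hb1⟩ := val_bounds hk hv B
    have hN := neg_impIter hk hv A
    simp only [val] at hN
    simp only [val, hN]
    split_ifs with ha
    · have hb := h v hv ha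
      rw [hb]; norm_num
    · rw [min_eq_left (by linarith)]
  · intro h v hv ha
    have := h v hv
    have hN := neg_impIter hk hv A
    simp only [val] at hN
    simp only [val, hN, if_pos ha] at this
    obtain ⟨hb0, hb1⟩ := val_bounds hk hv B
    rw [min_eq_right (by linarith)] at this
    · linarith [this]
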